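/- Let V_l : H_l → H_l ⊗ K (l = 1,2) be primitive isometries and define T₁₂ : B(H₂, H₁) → B(H₂, H₁) by T₁₂(X) = V₁*(X ⊗ id_K)V₂. If T₁₂ has an eigenvalue c of modulus one with eigenvector F (so T₁₂(F) = cF, F ≠ 0), then F*F = ‖F*F‖·id_{H₂} and FF* = ‖FF*‖·id_{H₁}; in particular dim H₁ = dim H₂ and F is a nonzero scalar multiple of a unitary U : H₂ → H₁. -/

import Mathlib

open Matrix Filter
open scoped Kronecker ComplexOrder

noncomputable section

/-- The action of `Φ ⊗ id_n` on block matrices, used to define complete positivity. -/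
def tensorId {a b : Type*} (Φ : Matrix a a ℂ → Matrix b b ℂ) (n : ℕ)
    (X : Matrix (a × Fin n) (a × Fin n) ℂ) : Matrix (b × Fin n) (b × Fin n) ℂ :=
  fun p q => Φ (fun i j => X (i, p.2) (j, q.2)) p.1 q.1

/-- A map between matrix algebras is completely positive if `Φ ⊗ id_n` preserves
positive semidefiniteness for every `n`. -/
def IsCompletelyPositive {a b : Type*} [Fintype a] [Fintype b]
    (Φ : Matrix a a ℂ → Matrix b b ℂ) : Prop :=
  ∀ (n : ℕ) (X : Matrix (a × Fin n) (a × Fin n) ℂ), X.PosSemidef → (tensorId Φ n X).PosSemidef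

/-- The map `X ↦ V₁* (X ⊗ 1_K) V₂` on `B(H₂, H₁)`, as a linear endomorphism.
For `V₁ = V₂ = V` this is the Heisenberg channel associated with the isometry `V`. -/
def sandwich {α β : Type*} [Fintype α] [Fintype β] {k : ℕ}
    (V₁ : Matrix (α × Fin k) α ℂ) (V₂ : Matrix (β × Fin k) β ℂ) :
    Module.End ℂ (Matrix α β ℂ) where
  toFun X := V₁ᴴ * (X ⊗ₖ (1 : Matrix (Fin k) (Fin k) ℂ)) * V₂
  map_add' X Y := by simp [Matrix.add_kronecker, Matrix.add_mul, Matrix.mul_add]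
  map_smul' c X := by simp [Matrix.smul_kronecker, Matrix.smul_mul, Matrix.mul_smul]

/-- The Kraus operators `K_i` of an isometry `V : H → H ⊗ K`,
defined by `K_i φ = (id ⊗ ⟨i|) V φ`. -/
def kraus {D k : ℕ} (V : Matrix (Fin D × Fin k) (Fin D) ℂ) (i : Fin k) :
    Matrix (Fin D) (Fin D) ℂ :=
  fun a b => V (a, i) b

/-- The `n`-step Kraus operator `K_{ι(n-1)} ⋯ K_{ι(0)}` associated with a word `ι`. -/
def krausString {D k : ℕ} (V : Matrix (Fin D × Fin k) (Fin D) ℂ) :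
    (n : ℕ) → (Fin n → Fin k) → Matrix (Fin D) (Fin D) ℂ
  | 0, _ => 1
  | n + 1, ι => kraus V (ι (Fin.last n)) * krausString V n (fun m => ι m.castSucc)

/-- The output state `tr_H [V(n) ρ V(n)*]` after `n` steps, a density matrix on `K^⊗n`. -/
def outputState {D k : ℕ} (V : Matrix (Fin D × Fin k) (Fin D) ℂ)
    (ρ : Matrix (Fin D) (Fin D) ℂ) (n : ℕ) :
    Matrix (Fin n → Fin k) (Fin n → Fin k) ℂ :=
  fun ι ι' => Matrix.trace (krausString V n ι * ρ * (krausString V n ι')ᴴ)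

/-- The Schrödinger (predual) transition map `ρ ↦ Σ_i K_i ρ K_i*`. -/
def schrodinger {D k : ℕ} (V : Matrix (Fin D × Fin k) (Fin D) ℂ)
    (ρ : Matrix (Fin D) (Fin D) ℂ) : Matrix (Fin D) (Fin D) ℂ :=
  ∑ i, kraus V i * ρ * (kraus V i)ᴴ

/-- A linear endomorphism of a matrix algebra is primitive if some power of it maps every
nonzero positive semidefinite matrix to a positive definite one. -/
def PrimitiveMap {α : Type*} [Fintype α] [DecidableEq α]
    (T : Module.End ℂ (Matrix α α ℂ)) : Prop :=
  ∃ n : ℕ, ∀ X : Matrix α α ℂ, X.PosSemidef → X ≠ 0 → ((T ^ n) X).PosDef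

/-- An isometry `V : H → H ⊗ K` is primitive if its channel `X ↦ V*(X ⊗ 1)V` is primitive. -/
def PrimitiveIso {D k : ℕ} (V : Matrix (Fin D × Fin k) (Fin D) ℂ) : Prop :=
  PrimitiveMap (sandwich V V)

/-- The pure state `|x⟩⟨x|` associated with a vector `x`. -/
def outer {α : Type*} (x : α → ℂ) : Matrix α α ℂ := Matrix.vecMulVec x (star x)

/-- The trace norm of a matrix: the trace of `√(A* A)`. -/
def traceNorm {α : Type*} [Fintype α] [DecidableEq α] (A : Matrix α α ℂ) : ℝ :=
  ((Matrix.posSemidef_conjTranspose_mul_self A).1.eigenvectorUnitary.1 *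
    diagonal (((↑) : ℝ → ℂ) ∘ (√·) ∘ (Matrix.posSemidef_conjTranspose_mul_self A).1.eigenvalues) *
    (star (Matrix.posSemidef_conjTranspose_mul_self A).1.eigenvectorUnitary : Matrix α α ℂ)).trace.re

/-- A quantum channel: a completely positive trace preserving linear map. -/
def IsCPTP {α β : Type*} [Fintype α] [Fintype β]
    (Φ : Matrix α α ℂ →ₗ[ℂ] Matrix β β ℂ) : Prop :=
  IsCompletelyPositive (Φ : Matrix α α ℂ → Matrix β β ℂ) ∧
    ∀ X : Matrix α α ℂ, (Φ X).trace = X.trace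

section Helpers

lemma kron_one_conjT {m n k : Type*} [Fintype k] [DecidableEq k] (A : Matrix m n ℂ) :
    (A ⊗ₖ (1 : Matrix k k ℂ))ᴴ = Aᴴ ⊗ₖ (1 : Matrix k k ℂ) := by
  ext p q
  simp [Matrix.conjTranspose_apply, Matrix.kroneckerMap_apply, Matrix.one_apply, eq_comm]
  split <;> simp

lemma kron_one_psd {n k : Type*} [Fintype n] [DecidableEq n] [Fintype k] [DecidableEq k]
    {A : Matrix n n ℂ} (hA : A.PosSemidef) : (A ⊗ₖ (1 : Matrix k k ℂ)).PosSemidef := by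
  exact hA.kronecker Matrix.PosSemidef.one

lemma trace_re_nonneg_of_psd {n : Type*} [Fintype n] [DecidableEq n] {A : Matrix n n ℂ}
    (hA : A.PosSemidef) : 0 ≤ A.trace.re := by
  have h : ∀ i, 0 ≤ A i i := by
    intro i
    exact hA.diag_nonneg
  rw [Matrix.trace, Complex.re_sum]
  exact Finset.sum_nonneg fun i _ => (Complex.le_def.mp (h i)).1

lemma herm_le_smul_one {n : Type*} [Fintype n] [DecidableEq n] {A : Matrix n n ℂ}
    (hA : A.IsHermitian) {t : ℝ} (ht : ∀ i, hA.eigenvalues i ≤ t) :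
    ((t : ℂ) • 1 - A).PosSemidef := by
  set U := (hA.eigenvectorUnitary : Matrix n n ℂ) with hUdef
  have hUU : U * star U = 1 := (Matrix.mem_unitaryGroup_iff).mp hA.eigenvectorUnitary.2
  have hspec := hA.spectral_theorem
  simp only [Unitary.conjStarAlgAut_apply, Unitary.coe_star, ← hUdef] at hspec
  have key : (t : ℂ) • 1 - A
      = U * ((t : ℂ) • 1 - diagonal (RCLike.ofReal ∘ hA.eigenvalues)) * star U := by
    rw [Matrix.mul_sub, Matrix.sub_mul, Matrix.mul_smul, Matrix.smul_mul, mul_one, hUU, ← hspec]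
  have hdiag : (t : ℂ) • (1 : Matrix n n ℂ) - diagonal (RCLike.ofReal ∘ hA.eigenvalues)
      = diagonal (fun i => ((t - hA.eigenvalues i : ℝ) : ℂ)) := by
    ext i j
    by_cases h : i = j <;>
      simp [h, Matrix.diagonal_apply, Matrix.one_apply, Complex.ofReal_sub]
  rw [key, hdiag, Matrix.star_eq_conjTranspose]
  refine Matrix.PosSemidef.mul_mul_conjTranspose_same ?_ U
  refine Matrix.posSemidef_diagonal_iff.mpr fun i => ?_
  rw [Complex.zero_le_real]
  linarith [ht i]

lemma herm_smul_one_le {n : Type*} [Fintype n] [DecidableEq n] {A : Matrix n n ℂ}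
    (hA : A.IsHermitian) {t : ℝ} (ht : ∀ i, t ≤ hA.eigenvalues i) :
    (A - (t : ℂ) • 1).PosSemidef := by
  set U := (hA.eigenvectorUnitary : Matrix n n ℂ) with hUdef
  have hUU : U * star U = 1 := (Matrix.mem_unitaryGroup_iff).mp hA.eigenvectorUnitary.2
  have hspec := hA.spectral_theorem
  simp only [Unitary.conjStarAlgAut_apply, Unitary.coe_star, ← hUdef] at hspec
  have key : A - (t : ℂ) • 1
      = U * (diagonal (RCLike.ofReal ∘ hA.eigenvalues) - (t : ℂ) • 1) * star U := by
    rw [Matrix.mul_sub, Matrix.sub_mul, Matrix.mul_smul, Matrix.smul_mul, mul_one, hUU, ← hspec]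
  have hdiag : diagonal (RCLike.ofReal ∘ hA.eigenvalues) - (t : ℂ) • (1 : Matrix n n ℂ)
      = diagonal (fun i => ((hA.eigenvalues i - t : ℝ) : ℂ)) := by
    ext i j
    by_cases h : i = j <;>
      simp [h, Matrix.diagonal_apply, Matrix.one_apply, Complex.ofReal_sub]
  rw [key, hdiag, Matrix.star_eq_conjTranspose]
  refine Matrix.PosSemidef.mul_mul_conjTranspose_same ?_ U
  refine Matrix.posSemidef_diagonal_iff.mpr fun i => ?_
  rw [Complex.zero_le_real]
  linarith [ht i]

lemma sandwich_psd {α : Type*} [Fintype α] [DecidableEq α] {k : ℕ}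
    (V : Matrix (α × Fin k) α ℂ) {A : Matrix α α ℂ} (hA : A.PosSemidef) :
    (sandwich V V A).PosSemidef :=
  (kron_one_psd hA).conjTranspose_mul_mul_same V

lemma sandwich_one {α : Type*} [Fintype α] [DecidableEq α] {k : ℕ}
    {V : Matrix (α × Fin k) α ℂ} (hV : Vᴴ * V = 1) :
    sandwich V V (1 : Matrix α α ℂ) = 1 := by
  show Vᴴ * ((1 : Matrix α α ℂ) ⊗ₖ (1 : Matrix (Fin k) (Fin k) ℂ)) * V = 1
  rw [Matrix.one_kronecker_one, Matrix.mul_one, hV]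

lemma sandwich_apply {α β : Type*} [Fintype α] [Fintype β] {k : ℕ}
    (V₁ : Matrix (α × Fin k) α ℂ) (V₂ : Matrix (β × Fin k) β ℂ) (X : Matrix α β ℂ) :
    sandwich V₁ V₂ X = V₁ᴴ * (X ⊗ₖ (1 : Matrix (Fin k) (Fin k) ℂ)) * V₂ := rfl

lemma sandwich_conjT {α β : Type*} [Fintype α] [Fintype β] {k : ℕ}
    (V₁ : Matrix (α × Fin k) α ℂ) (V₂ : Matrix (β × Fin k) β ℂ)
    (F : Matrix α β ℂ) :
    (sandwich V₁ V₂ F)ᴴ = sandwich V₂ V₁ Fᴴ := by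
  rw [sandwich_apply, sandwich_apply]
  rw [Matrix.conjTranspose_mul, Matrix.conjTranspose_mul, kron_one_conjT,
    Matrix.conjTranspose_conjTranspose, Matrix.mul_assoc]

lemma sandwich_pow_psd {α : Type*} [Fintype α] [DecidableEq α] {k : ℕ}
    (V : Matrix (α × Fin k) α ℂ) (m : ℕ) {A : Matrix α α ℂ} (hA : A.PosSemidef) :
    ((sandwich V V ^ m) A).PosSemidef := by
  induction m generalizing A with
  | zero => simpa using hA
  | succ m ih =>
    rw [pow_succ, Module.End.mul_apply]
    exact ih (sandwich_psd V hA)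

lemma sandwich_pow_one {α : Type*} [Fintype α] [DecidableEq α] {k : ℕ}
    {V : Matrix (α × Fin k) α ℂ} (hV : Vᴴ * V = 1) (m : ℕ) :
    (sandwich V V ^ m) (1 : Matrix α α ℂ) = 1 := by
  induction m with
  | zero => simp
  | succ m ih => rw [pow_succ, Module.End.mul_apply, sandwich_one hV, ih]

lemma schwarz {α β : Type*} [Fintype α] [Fintype β] [DecidableEq α] [DecidableEq β] {k : ℕ}
    {V₁ : Matrix (α × Fin k) α ℂ} (hV₁ : V₁ᴴ * V₁ = 1)
    (V₂ : Matrix (β × Fin k) β ℂ) (F : Matrix α β ℂ) :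
    (sandwich V₂ V₂ (Fᴴ * F) - (sandwich V₁ V₂ F)ᴴ * (sandwich V₁ V₂ F)).PosSemidef := by
  set P : Matrix (α × Fin k) (α × Fin k) ℂ := V₁ * V₁ᴴ with hPdef
  have hPP : P * P = P := by
    rw [hPdef, Matrix.mul_assoc, ← Matrix.mul_assoc V₁ᴴ, hV₁, Matrix.one_mul]
  have h1 : ((1 : Matrix (α × Fin k) (α × Fin k) ℂ) - P)ᴴ = 1 - P := by
    rw [Matrix.conjTranspose_sub, Matrix.conjTranspose_one, hPdef, Matrix.conjTranspose_mul,
      Matrix.conjTranspose_conjTranspose]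
  have h2 : ((1 : Matrix (α × Fin k) (α × Fin k) ℂ) - P) * (1 - P) = 1 - P := by
    rw [Matrix.mul_sub, Matrix.sub_mul, Matrix.sub_mul, Matrix.mul_one, Matrix.one_mul, hPP]
    simp
  have hQ : ((1 : Matrix (α × Fin k) (α × Fin k) ℂ) - P).PosSemidef := by
    have := Matrix.posSemidef_conjTranspose_mul_self
      ((1 : Matrix (α × Fin k) (α × Fin k) ℂ) - P)
    rwa [h1, h2] at this
  have key : sandwich V₂ V₂ (Fᴴ * F) - (sandwich V₁ V₂ F)ᴴ * (sandwich V₁ V₂ F)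
      = ((F ⊗ₖ (1 : Matrix (Fin k) (Fin k) ℂ)) * V₂)ᴴ * (1 - P)
        * ((F ⊗ₖ (1 : Matrix (Fin k) (Fin k) ℂ)) * V₂) := by
    rw [sandwich_apply, sandwich_apply]
    have hkron : (Fᴴ * F) ⊗ₖ (1 : Matrix (Fin k) (Fin k) ℂ)
        = (Fᴴ ⊗ₖ (1 : Matrix (Fin k) (Fin k) ℂ)) * (F ⊗ₖ (1 : Matrix (Fin k) (Fin k) ℂ)) := by
      rw [← Matrix.mul_kronecker_mul, Matrix.one_mul]
    rw [hkron]
    simp only [Matrix.conjTranspose_mul, kron_one_conjT, Matrix.conjTranspose_conjTranspose,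
      Matrix.mul_sub, Matrix.sub_mul, Matrix.mul_one, Matrix.one_mul, Matrix.mul_assoc, hPdef]
  rw [key]
  exact hQ.conjTranspose_mul_mul_same _

end Helpers

section Core

variable {D k : ℕ}

lemma card_re_smul (t : ℝ) (z : ℝ) : ((t : ℂ) • ((z : ℂ))).re = t * z := by
  simp [smul_eq_mul, ← Complex.ofReal_mul]

/-- If `A` is PSD and `T A - A` is PSD for a primitive isometry channel `T`, then `T A = A`. -/
lemma sandwich_fix (V : Matrix (Fin D × Fin k) (Fin D) ℂ) (hV : Vᴴ * V = 1)
    (hP : PrimitiveIso V) {A : Matrix (Fin D) (Fin D) ℂ} (hA : A.PosSemidef)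
    (hsub : (sandwich V V A - A).PosSemidef) : sandwich V V A = A := by
  rcases Nat.eq_zero_or_pos D with hD | hD
  · subst hD; ext i; exact i.elim0
  have : Nonempty (Fin D) := ⟨⟨0, hD⟩⟩
  rw [← sub_eq_zero]
  by_contra hne
  obtain ⟨n, hn⟩ := hP
  have hPD : ((sandwich V V ^ n) (sandwich V V A - A)).PosDef := hn _ hsub hne
  set ε : ℝ := Finset.univ.inf' Finset.univ_nonempty hPD.1.eigenvalues with hε
  have hεpos : 0 < ε := by
    rw [hε, Finset.lt_inf'_iff]
    exact fun i _ => hPD.eigenvalues_pos i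
  have hlow : ((sandwich V V ^ n) (sandwich V V A - A) - (ε : ℂ) • 1).PosSemidef :=
    herm_smul_one_le hPD.1 fun i => Finset.inf'_le _ (Finset.mem_univ i)
  set t : ℝ := Finset.univ.sup' Finset.univ_nonempty hA.1.eigenvalues with htdef
  have hup : ((t : ℂ) • 1 - A).PosSemidef :=
    herm_le_smul_one hA.1 fun i => Finset.le_sup' _ (Finset.mem_univ i)
  set r : ℕ → ℝ := fun N => ((sandwich V V ^ N) A).trace.re with hr
  have hrub : ∀ N, r N ≤ t * D := by
    intro N
    have h1 : ((sandwich V V ^ N) ((t : ℂ) • 1 - A)).PosSemidef := sandwich_pow_psd V N hup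
    have h2 : (sandwich V V ^ N) ((t : ℂ) • 1 - A)
        = (t : ℂ) • 1 - (sandwich V V ^ N) A := by
      rw [map_sub, LinearMap.map_smul, sandwich_pow_one hV]
    rw [h2] at h1
    have h3 := trace_re_nonneg_of_psd h1
    rw [Matrix.trace_sub, Matrix.trace_smul, Matrix.trace_one] at h3
    rw [Complex.sub_re] at h3
    have h4 : (((t : ℂ)) • ((Fintype.card (Fin D) : ℂ))).re = t * D := by
      rw [show ((Fintype.card (Fin D) : ℂ)) = ((D : ℝ) : ℂ) by simp]
      exact card_re_smul t D
    rw [h4] at h3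
    simp only [hr]
    linarith
  have hstep : ∀ m, r (n + m) + ε * D ≤ r (n + m + 1) := by
    intro m
    have e1 : (sandwich V V ^ (n + m + 1)) A
        = (sandwich V V ^ m) ((sandwich V V ^ n) (sandwich V V A)) := by
      rw [show n + m + 1 = m + (n + 1) by ring, pow_add, pow_succ,
        Module.End.mul_apply, Module.End.mul_apply]
    have e2 : (sandwich V V ^ (n + m)) A = (sandwich V V ^ m) ((sandwich V V ^ n) A) := by
      rw [show n + m = m + n by ring, pow_add, Module.End.mul_apply]
    have hdiff : (sandwich V V ^ (n + m + 1)) A - (sandwich V V ^ (n + m)) A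
        = (sandwich V V ^ m) ((sandwich V V ^ n) (sandwich V V A - A)) := by
      rw [e1, e2, ← map_sub, ← map_sub]
    have hpsd : ((sandwich V V ^ (n + m + 1)) A - (sandwich V V ^ (n + m)) A
        - (ε : ℂ) • 1).PosSemidef := by
      have heq : (sandwich V V ^ m) ((sandwich V V ^ n) (sandwich V V A - A) - (ε : ℂ) • 1)
          = (sandwich V V ^ (n + m + 1)) A - (sandwich V V ^ (n + m)) A - (ε : ℂ) • 1 := by
        rw [map_sub, LinearMap.map_smul, sandwich_pow_one hV, hdiff]
      rw [← heq]
      exact sandwich_pow_psd V m hlow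
    have h3 := trace_re_nonneg_of_psd hpsd
    rw [Matrix.trace_sub, Matrix.trace_sub, Matrix.trace_smul, Matrix.trace_one] at h3
    rw [Complex.sub_re, Complex.sub_re] at h3
    have h4 : (((ε : ℂ)) • ((Fintype.card (Fin D) : ℂ))).re = ε * D := by
      rw [show ((Fintype.card (Fin D) : ℂ)) = ((D : ℝ) : ℂ) by simp]
      exact card_re_smul ε D
    rw [h4] at h3
    simp only [hr]
    linarith
  have hlin : ∀ m, r n + m * (ε * D) ≤ r (n + m) := by
    intro m
    induction m with
    | zero => simp
    | succ m ih =>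
      have h5 := hstep m
      have h6 : r n + ((m : ℝ) + 1) * (ε * D) ≤ r (n + m) + ε * D := by push_cast at ih ⊢; linarith
      calc r n + ((m : ℕ) + 1 : ℕ) * (ε * D) = r n + ((m : ℝ) + 1) * (ε * D) := by push_cast; ring
        _ ≤ r (n + m) + ε * D := h6
        _ ≤ r (n + m + 1) := h5
        _ = r (n + (m + 1)) := by ring_nf
  have hεD : 0 < ε * D := by positivity
  obtain ⟨m, hm⟩ := exists_nat_gt ((t * D - r n) / (ε * D))
  have hlt : t * D < r n + m * (ε * D) := by
    rw [div_lt_iff₀ hεD] at hm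
    linarith
  linarith [hlin m, hrub (n + m)]

/-- A nonzero PSD fixed point of a primitive channel is a positive multiple of the identity. -/
lemma fixed_scalar (V : Matrix (Fin D × Fin k) (Fin D) ℂ) (hV : Vᴴ * V = 1)
    (hP : PrimitiveIso V) {A : Matrix (Fin D) (Fin D) ℂ} (hA : A.PosSemidef) (hAne : A ≠ 0)
    (hfix : sandwich V V A = A) : ∃ a : ℝ, 0 < a ∧ A = (a : ℂ) • 1 := by
  have hD : 0 < D := by
    rcases Nat.eq_zero_or_pos D with h | h
    · subst h; exact absurd (by ext i; exact i.elim0) hAne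
    · exact h
  have : Nonempty (Fin D) := ⟨⟨0, hD⟩⟩
  set a : ℝ := Finset.univ.inf' Finset.univ_nonempty hA.1.eigenvalues with ha
  obtain ⟨i₀, -, hi₀⟩ := Finset.exists_mem_eq_inf' Finset.univ_nonempty hA.1.eigenvalues
  have hi₀' : hA.1.eigenvalues i₀ = a := by rw [ha, hi₀]
  set B : Matrix (Fin D) (Fin D) ℂ := A - (a : ℂ) • 1 with hB
  have hBpsd : B.PosSemidef :=
    herm_smul_one_le hA.1 fun i => Finset.inf'_le _ (Finset.mem_univ i)
  have hBfix : sandwich V V B = B := by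
    rw [hB, map_sub, LinearMap.map_smul, hfix, sandwich_one hV]
  have hBfixn : ∀ m, (sandwich V V ^ m) B = B := by
    intro m
    induction m with
    | zero => simp
    | succ m ih => rw [pow_succ', Module.End.mul_apply, ih, hBfix]
  set v : Fin D → ℂ := ⇑(hA.1.eigenvectorBasis i₀) with hv
  have hvA : A *ᵥ v = hA.1.eigenvalues i₀ • v := hA.1.mulVec_eigenvectorBasis i₀
  have hvne : v ≠ 0 := by
    intro h
    apply hA.1.eigenvectorBasis.orthonormal.ne_zero i₀
    ext j
    exact congrFun h j
  have hBv : B *ᵥ v = 0 := by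
    rw [hB, Matrix.sub_mulVec, hvA, Matrix.smul_mulVec, Matrix.one_mulVec, hi₀']
    ext j
    simp [Complex.real_smul]
  have hBzero : B = 0 := by
    by_contra hBne
    obtain ⟨n, hn⟩ := hP
    have hPD : ((sandwich V V ^ n) B).PosDef := hn B hBpsd hBne
    rw [hBfixn n] at hPD
    have hcon := hPD.dotProduct_mulVec_pos hvne
    rw [hBv] at hcon
    simp at hcon
  have hAeq : A = (a : ℂ) • 1 := by
    have h7 := hBzero
    rw [hB] at h7
    exact sub_eq_zero.mp h7
  refine ⟨a, ?_, hAeq⟩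
  have hanonneg : 0 ≤ a := by
    rw [← hi₀']
    exact hA.eigenvalues_nonneg i₀
  rcases hanonneg.lt_or_eq with h | h
  · exact h
  · exfalso
    apply hAne
    rw [hAeq, ← h]
    simp

end Core

/-- If the map `T₁₂(X) = V₁*(X ⊗ 1)V₂` between primitive isometries has an eigenvector `F`
with eigenvalue of modulus one, then `F*F` and `FF*` are positive multiples of the identity;
in particular the spaces have equal dimension and `F` is a scalar multiple of a unitary. -/
theorem modulus_one_eigenvector_is_multiple_of_unitary (D₁ D₂ k : ℕ)
    (V₁ : Matrix (Fin D₁ × Fin k) (Fin D₁) ℂ) (hV₁ : V₁ᴴ * V₁ = 1) (hP₁ : PrimitiveIso V₁)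
    (V₂ : Matrix (Fin D₂ × Fin k) (Fin D₂) ℂ) (hV₂ : V₂ᴴ * V₂ = 1) (hP₂ : PrimitiveIso V₂)
    (c : ℂ) (hc : ‖c‖ = 1)
    (F : Matrix (Fin D₁) (Fin D₂) ℂ) (hF : F ≠ 0)
    (heig : sandwich V₁ V₂ F = c • F) :
    ∃ α : ℝ, 0 < α ∧
      Fᴴ * F = (α : ℂ) • (1 : Matrix (Fin D₂) (Fin D₂) ℂ) ∧
      F * Fᴴ = (α : ℂ) • (1 : Matrix (Fin D₁) (Fin D₁) ℂ) ∧
      D₁ = D₂ ∧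
      ∃ U : Matrix (Fin D₁) (Fin D₂) ℂ, Uᴴ * U = 1 ∧ U * Uᴴ = 1 ∧
        F = ((Real.sqrt α : ℝ) : ℂ) • U := by
  have hD₂pos : 0 < D₂ := by
    rcases Nat.eq_zero_or_pos D₂ with h | h
    · exact absurd (by subst h; ext i j; exact j.elim0) hF
    · exact h
  have hcc : (starRingEnd ℂ) c * c = 1 := by
    rw [mul_comm, Complex.mul_conj]
    norm_cast
    rw [Complex.normSq_eq_norm_sq, hc]; norm_num
  have hcc' : c * (starRingEnd ℂ) c = 1 := by rw [mul_comm]; exact hcc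
  -- F*F is a fixed point of the channel of V₂
  have hs₂ : (sandwich V₂ V₂ (Fᴴ * F) - Fᴴ * F).PosSemidef := by
    have hs := schwarz hV₁ V₂ F
    have he : (sandwich V₁ V₂ F)ᴴ * (sandwich V₁ V₂ F) = Fᴴ * F := by
      rw [heig, Matrix.conjTranspose_smul, Matrix.smul_mul, Matrix.mul_smul, smul_smul]
      rw [show (star c : ℂ) = (starRingEnd ℂ) c from rfl, hcc, one_smul]
    rwa [he] at hs
  have hfix₂ : sandwich V₂ V₂ (Fᴴ * F) = Fᴴ * F :=
    sandwich_fix V₂ hV₂ hP₂ (Matrix.posSemidef_conjTranspose_mul_self F) hs₂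
  have hFFne : Fᴴ * F ≠ 0 := fun h => hF (Matrix.conjTranspose_mul_self_eq_zero.mp h)
  obtain ⟨α, hαpos, hα⟩ := fixed_scalar V₂ hV₂ hP₂
    (Matrix.posSemidef_conjTranspose_mul_self F) hFFne hfix₂
  -- FF* is a fixed point of the channel of V₁
  have hadj : sandwich V₂ V₁ Fᴴ = (starRingEnd ℂ) c • Fᴴ := by
    rw [← sandwich_conjT, heig, Matrix.conjTranspose_smul]
    rfl
  have hs₁ : (sandwich V₁ V₁ (F * Fᴴ) - F * Fᴴ).PosSemidef := by
    have hs := schwarz hV₂ V₁ Fᴴ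
    have he : (sandwich V₂ V₁ Fᴴ)ᴴ * (sandwich V₂ V₁ Fᴴ) = Fᴴᴴ * Fᴴ := by
      rw [hadj, Matrix.conjTranspose_smul, Matrix.smul_mul, Matrix.mul_smul, smul_smul]
      rw [show (star ((starRingEnd ℂ) c) : ℂ) = c from Complex.conj_conj c, hcc', one_smul]
    rw [he] at hs
    rwa [Matrix.conjTranspose_conjTranspose] at hs
  have hfix₁ : sandwich V₁ V₁ (F * Fᴴ) = F * Fᴴ := by
    have h := Matrix.posSemidef_conjTranspose_mul_self Fᴴ
    rw [Matrix.conjTranspose_conjTranspose] at h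
    exact sandwich_fix V₁ hV₁ hP₁ h hs₁
  have hFFne' : F * Fᴴ ≠ 0 := by
    intro h
    apply hF
    have : Fᴴᴴ * Fᴴ = 0 := by rwa [Matrix.conjTranspose_conjTranspose]
    have := Matrix.conjTranspose_mul_self_eq_zero.mp this
    rwa [Matrix.conjTranspose_eq_zero] at this
  obtain ⟨β, hβpos, hβ⟩ := by
    refine fixed_scalar V₁ hV₁ hP₁ ?_ hFFne' hfix₁
    have h := Matrix.posSemidef_conjTranspose_mul_self Fᴴ
    rwa [Matrix.conjTranspose_conjTranspose] at h
  -- ranks give D₁ = D₂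
  have hunit₂ : IsUnit ((α : ℂ) • (1 : Matrix (Fin D₂) (Fin D₂) ℂ)) := by
    rw [Matrix.isUnit_iff_isUnit_det, isUnit_iff_ne_zero, Matrix.det_smul, Matrix.det_one]
    simp only [mul_one]
    exact pow_ne_zero _ (by exact_mod_cast Complex.ofReal_ne_zero.mpr hαpos.ne')
  have hunit₁ : IsUnit ((β : ℂ) • (1 : Matrix (Fin D₁) (Fin D₁) ℂ)) := by
    rw [Matrix.isUnit_iff_isUnit_det, isUnit_iff_ne_zero, Matrix.det_smul, Matrix.det_one]
    simp only [mul_one]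
    exact pow_ne_zero _ (by exact_mod_cast Complex.ofReal_ne_zero.mpr hβpos.ne')
  have hrank₂ : F.rank = D₂ := by
    rw [← Matrix.rank_conjTranspose_mul_self, hα, Matrix.rank_of_isUnit _ hunit₂,
      Fintype.card_fin]
  have hrank₁ : F.rank = D₁ := by
    have : (Fᴴᴴ * Fᴴ).rank = Fᴴ.rank := Matrix.rank_conjTranspose_mul_self Fᴴ
    rw [Matrix.conjTranspose_conjTranspose, Matrix.rank_conjTranspose] at this
    rw [← this, hβ, Matrix.rank_of_isUnit _ hunit₁, Fintype.card_fin]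
  have hD : D₁ = D₂ := by rw [← hrank₁, hrank₂]
  -- α = β via traces
  have htr : (α : ℂ) * D₂ = (β : ℂ) * D₁ := by
    have h := Matrix.trace_mul_comm Fᴴ F
    rw [hα, hβ, Matrix.trace_smul, Matrix.trace_smul, Matrix.trace_one, Matrix.trace_one] at h
    simpa [Fintype.card_fin, smul_eq_mul] using h
  have hαβ : α = β := by
    rw [hD] at htr
    have hD₂ne : ((D₂ : ℂ)) ≠ 0 := Nat.cast_ne_zero.mpr hD₂pos.ne'
    have := mul_right_cancel₀ hD₂ne htr
    exact_mod_cast this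
  subst hαβ
  -- construct the unitary
  refine ⟨α, hαpos, hα, hβ, hD, ?_⟩
  set s : ℝ := Real.sqrt α with hsdef
  have hs0 : 0 < s := Real.sqrt_pos.mpr hαpos
  have hss : s * s = α := Real.mul_self_sqrt hαpos.le
  refine ⟨((s⁻¹ : ℝ) : ℂ) • F, ?_, ?_, ?_⟩
  · rw [Matrix.conjTranspose_smul, Matrix.smul_mul, Matrix.mul_smul, smul_smul, hα, smul_smul]
    rw [show (star ((s⁻¹ : ℝ) : ℂ) : ℂ) = ((s⁻¹ : ℝ) : ℂ) from Complex.conj_ofReal _]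
    rw [show (((s⁻¹ : ℝ) : ℂ) * ((s⁻¹ : ℝ) : ℂ) * (α : ℂ)) = (((s⁻¹ * s⁻¹ * α : ℝ)) : ℂ) by
      push_cast; ring]
    rw [show s⁻¹ * s⁻¹ * α = 1 by field_simp; linarith [hss]]
    simp
  · rw [Matrix.conjTranspose_smul, Matrix.smul_mul, Matrix.mul_smul, smul_smul, hβ, smul_smul]
    rw [show (star ((s⁻¹ : ℝ) : ℂ) : ℂ) = ((s⁻¹ : ℝ) : ℂ) from Complex.conj_ofReal _]
    rw [show (((s⁻¹ : ℝ) : ℂ) * ((s⁻¹ : ℝ) : ℂ) * (α : ℂ)) = (((s⁻¹ * s⁻¹ * α : ℝ)) : ℂ) by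
      push_cast; ring]
    rw [show s⁻¹ * s⁻¹ * α = 1 by field_simp; linarith [hss]]
    simp
  · rw [smul_smul, show ((s : ℝ) : ℂ) * ((s⁻¹ : ℝ) : ℂ) = (((s * s⁻¹ : ℝ)) : ℂ) by push_cast; ring,
      mul_inv_cancel₀ hs0.ne']
    simp
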